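/- Let X be a topological space, let τ be an ordinal, and let (α_n)_{n∈ℕ} be a strictly increasing sequence of ordinals with supremum μ < τ. For an ordinal β ≤ τ, let F(X,β) denote the set of continuous real-valued functions f on X × [0,τ) such that for every x ∈ X, f is constant on {x} × [β,τ). Then the closure of ⋃_{n∈ℕ} F(X,α_n) in C_p(X × [0,τ)) equals F(X,μ). -/
import Mathlib


open Cardinal Set

universe u

/-- `Cp X` : the space of continuous real-valued functions on `X` with the topology of
pointwise convergence (subspace topology inherited from the product `ℝ^X`). -/
abbrev Cp (X : Type*) [TopologicalSpace X] := {f : X → ℝ // Continuous f}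

/-- Let `X` be a space, `τ` an ordinal and `(α_n)` a strictly increasing
sequence of ordinals with supremum `μ < τ`. Writing `F(X,β)` for the set of continuous
real-valued functions on `X × [0,τ)` constant on `{x} × [β,τ)` for every `x`, the closure
of `⋃ n, F(X,α_n)` in `Cp (X × [0,τ))` equals `F(X,μ)`. -/
theorem statement10 (X : Type u) [TopologicalSpace X] (τ : Ordinal.{u})
    (α : ℕ → Ordinal.{u}) (hmono : StrictMono α)
    (μ : Ordinal.{u}) (hsup : μ = ⨆ n, α n) (hμτ : μ < τ) :
    closure (⋃ n : ℕ, {f : Cp (X × Set.Iio τ) |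
        ∀ (x : X) (a b : Set.Iio τ), α n ≤ a.1 → α n ≤ b.1 → f.1 (x, a) = f.1 (x, b)})
      = {f : Cp (X × Set.Iio τ) |
        ∀ (x : X) (a b : Set.Iio τ), μ ≤ a.1 → μ ≤ b.1 → f.1 (x, a) = f.1 (x, b)} := by
  have hαμ : ∀ n, α n ≤ μ := fun n => hsup ▸ le_ciSup (Ordinal.bddAbove_range α) n
  have hατ : ∀ n, α n < τ := fun n => (hαμ n).trans_lt hμτ
  -- evaluation maps are continuous on Cp
  have heval : ∀ p : X × Set.Iio τ, Continuous fun f : Cp (X × Set.Iio τ) => f.1 p :=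
    fun p => (continuous_apply p).comp continuous_subtype_val
  apply Subset.antisymm
  · -- closure of union ⊆ RHS since RHS closed and contains union
    have hclosed : IsClosed {f : Cp (X × Set.Iio τ) |
        ∀ (x : X) (a b : Set.Iio τ), μ ≤ a.1 → μ ≤ b.1 → f.1 (x, a) = f.1 (x, b)} := by
      have : {f : Cp (X × Set.Iio τ) |
          ∀ (x : X) (a b : Set.Iio τ), μ ≤ a.1 → μ ≤ b.1 → f.1 (x, a) = f.1 (x, b)} =
          ⋂ (x : X) (a : Set.Iio τ) (b : Set.Iio τ) (_ : μ ≤ a.1) (_ : μ ≤ b.1),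
            {f : Cp (X × Set.Iio τ) | f.1 (x, a) = f.1 (x, b)} := by
        ext f; simp [Set.mem_iInter]
      rw [this]
      exact isClosed_iInter fun x => isClosed_iInter fun a => isClosed_iInter fun b =>
        isClosed_iInter fun _ => isClosed_iInter fun _ =>
          isClosed_eq (heval (x, a)) (heval (x, b))
    refine closure_minimal (Set.iUnion_subset fun n f hf x a b ha hb => ?_) hclosed
    exact hf x a b ((hαμ n).trans ha) ((hαμ n).trans hb)
  · -- f ∈ RHS is the limit of g n := f ∘ (x, t) ↦ (x, min t (α n))
    intro f hf
    -- the retraction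
    have hmin : ∀ (n : ℕ) (t : Set.Iio τ), min t.1 (α n) < τ :=
      fun n t => lt_of_le_of_lt (min_le_left _ _) t.2
    set φ : ℕ → X × Set.Iio τ → X × Set.Iio τ :=
      fun n p => (p.1, ⟨min p.2.1 (α n), hmin n p.2⟩) with hφ
    have hφc : ∀ n, Continuous (φ n) := by
      intro n
      refine continuous_fst.prodMk (Continuous.subtype_mk ?_ _)
      exact (continuous_subtype_val.comp continuous_snd).min continuous_const
    set g : ℕ → Cp (X × Set.Iio τ) := fun n => ⟨f.1 ∘ φ n, f.2.comp (hφc n)⟩ with hg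
    have hgmem : ∀ n, g n ∈ (⋃ n : ℕ, {f : Cp (X × Set.Iio τ) |
        ∀ (x : X) (a b : Set.Iio τ), α n ≤ a.1 → α n ≤ b.1 → f.1 (x, a) = f.1 (x, b)}) := by
      intro n
      refine Set.mem_iUnion.2 ⟨n, fun x a b ha hb => ?_⟩
      show f.1 (φ n (x, a)) = f.1 (φ n (x, b))
      have : φ n (x, a) = φ n (x, b) := by
        simp only [hφ]
        exact Prod.ext rfl (Subtype.ext ((min_eq_right ha).trans (min_eq_right hb).symm))
      rw [this]
    -- α n tends to μ
    have hαtend : Filter.Tendsto α Filter.atTop (nhds μ) := by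
      rw [hsup]
      exact tendsto_atTop_ciSup hmono.monotone (Ordinal.bddAbove_range α)
    -- g n tends to f pointwise
    have htend : Filter.Tendsto g Filter.atTop (nhds f) := by
      rw [tendsto_subtype_rng]
      rw [tendsto_pi_nhds]
      intro p
      obtain ⟨x, t⟩ := p
      rcases lt_or_ge t.1 μ with ht | ht
      · -- eventually α n > t, so g n value is constant f (x, t)
        have : ∃ N, t.1 < α N := by
          by_contra h
          push_neg at h
          exact absurd (hsup ▸ ciSup_le h) (not_le_of_gt ht)
        obtain ⟨N, hN⟩ := this
        apply Filter.Tendsto.congr' (f₁ := fun _ => f.1 (x, t))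
        · filter_upwards [Filter.eventually_ge_atTop N] with n hn
          show f.1 (x, t) = f.1 (φ n (x, t))
          have : φ n (x, t) = (x, t) := by
            simp only [hφ]
            exact Prod.ext rfl (Subtype.ext (min_eq_left (hN.le.trans (hmono.monotone hn))))
          rw [this]
        · exact tendsto_const_nhds
      · -- g n (x,t) = f (x, α n) → f (x, μ) = f (x, t)
        have hgen : ∀ n, (g n).1 (x, t) = f.1 (x, ⟨α n, hατ n⟩) := by
          intro n
          show f.1 (φ n (x, t)) = _
          have : φ n (x, t) = (x, ⟨α n, hατ n⟩) := by
            simp only [hφ]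
            exact Prod.ext rfl (Subtype.ext (min_eq_right ((hαμ n).trans ht)))
          rw [this]
        have hft : f.1 (x, t) = f.1 (x, ⟨μ, hμτ⟩) := hf x t ⟨μ, hμτ⟩ ht le_rfl
        refine Filter.Tendsto.congr (fun n => (hgen n).symm) ?_
        rw [hft]
        have hsub : Filter.Tendsto (fun n => (⟨α n, hατ n⟩ : Set.Iio τ)) Filter.atTop
            (nhds ⟨μ, hμτ⟩) := by
          rw [tendsto_subtype_rng]
          exact hαtend
        exact (f.2.comp (Continuous.prodMk_right x)).continuousAt.tendsto.comp hsub
    exact mem_closure_of_tendsto htend (Filter.Eventually.of_forall hgmem)
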